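/- Let φ : [0,∞) → [0,∞) be increasing and subadditive with φ(0) = 0 and linear growth with constant ν > 0, i.e. φ(x) ≤ ν(x + 1) for all x ≥ 0. Then for every k ≥ 2ν and every x ≥ 0 one has φ(x) ≤ kx + φ(2ν/k). In particular, for every μ > 0, y ∈ ℝ, z ∈ ℝ^d and k ≥ 2ν: μ|y| + φ(‖z‖) ≤ μ|y| + k‖z‖ + φ(2ν/k). -/

import Mathlib

/-- If `φ : [0,∞) → [0,∞)` is increasing and subadditive with `φ 0 = 0`
and linear growth `φ x ≤ ν (x + 1)`, then for every `k ≥ 2ν` and `x ≥ 0` one has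
`φ x ≤ k x + φ (2ν/k)`; in particular
`μ|y| + φ ‖z‖ ≤ μ|y| + k ‖z‖ + φ (2ν/k)`. -/
theorem stmt_1 (d : ℕ) (hd : 1 ≤ d) (μ ν : ℝ) (hμ : 0 < μ) (hν : 0 < ν)
    (φ : ℝ → ℝ)
    (hφ_nonneg : ∀ x, 0 ≤ x → 0 ≤ φ x)
    (hφ_mono : ∀ a b, 0 ≤ a → a ≤ b → φ a ≤ φ b)
    (hφ_subadd : ∀ a b, 0 ≤ a → 0 ≤ b → φ (a + b) ≤ φ a + φ b)
    (hφ0 : φ 0 = 0)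
    (hφ_growth : ∀ x, 0 ≤ x → φ x ≤ ν * (x + 1)) :
    (∀ k, 2 * ν ≤ k → ∀ x, 0 ≤ x → φ x ≤ k * x + φ (2 * ν / k)) ∧
    (∀ k, 2 * ν ≤ k → ∀ (y : ℝ) (z : EuclideanSpace ℝ (Fin d)),
      μ * |y| + φ ‖z‖ ≤ μ * |y| + k * ‖z‖ + φ (2 * ν / k)) := by
  have main : ∀ k, 2 * ν ≤ k → ∀ x, 0 ≤ x → φ x ≤ k * x + φ (2 * ν / k) := by
    intro k hk x hx
    have hk0 : 0 < k := lt_of_lt_of_le (by linarith) hk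
    set h : ℝ := 2 * ν / k with hh_def
    have hh : 0 < h := div_pos (by linarith) hk0
    have hiter : ∀ n : ℕ, φ ((n : ℝ) * h) ≤ (n : ℝ) * φ h := by
      intro n
      induction n with
      | zero => simp [hφ0]
      | succ n ih =>
        have : φ ((n : ℝ) * h + h) ≤ φ ((n : ℝ) * h) + φ h :=
          hφ_subadd _ _ (by positivity) hh.le
        push_cast
        calc φ (((n : ℝ) + 1) * h) = φ ((n : ℝ) * h + h) := by ring_nf
          _ ≤ φ ((n : ℝ) * h) + φ h := this
          _ ≤ (n : ℝ) * φ h + φ h := by linarith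
          _ = ((n : ℝ) + 1) * φ h := by ring
    set n : ℕ := ⌈x / h⌉₊ with hn_def
    have hx_le : x ≤ (n : ℝ) * h := by
      rw [← div_le_iff₀ hh]; exact Nat.le_ceil _
    have hn_le : (n : ℝ) ≤ x / h + 1 := (Nat.ceil_lt_add_one (by positivity)).le
    have hφh_le : φ h ≤ k * h := by
      have h1 : h ≤ 1 := by
        rw [hh_def, div_le_one hk0]; exact hk
      have := hφ_growth h hh.le
      have : φ h ≤ 2 * ν := by nlinarith
      have : k * h = 2 * ν := by rw [hh_def, mul_div_assoc', mul_div_cancel_left₀ _ hk0.ne']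
      linarith
    have hφh_nonneg : 0 ≤ φ h := hφ_nonneg h hh.le
    calc φ x ≤ φ ((n : ℝ) * h) := hφ_mono _ _ hx hx_le
      _ ≤ (n : ℝ) * φ h := hiter n
      _ ≤ (x / h + 1) * φ h := by nlinarith
      _ = (x / h) * φ h + φ h := by ring
      _ ≤ (x / h) * (k * h) + φ h := by
          have : 0 ≤ x / h := by positivity
          nlinarith
      _ = k * x + φ h := by field_simp
  refine ⟨main, fun k hk y z => ?_⟩
  have := main k hk ‖z‖ (norm_nonneg z)
  linarith
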